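/- The function ψ : [0,1] → ℝ defined by ψ(x) = 1 − e^{−√x}·√(1 + 2√x) satisfies ψ(0) = 0, ψ'(x) = (1 − ψ(x))/(1 + 2√x) for all x ∈ (0,1], its derivative ψ'(x) = e^{−√x}/√(1 + 2√x) is monotonically decreasing on (0,1], ψ is concave on [0,1], and ψ(1) = 1 − √3/e. -/

import Mathlib

/-- The function `ψ(x) = 1 − e^{−√x}·√(1 + 2√x)`. -/
noncomputable def psiFun (x : ℝ) : ℝ :=
  1 - Real.exp (-Real.sqrt x) * Real.sqrt (1 + 2 * Real.sqrt x)

lemma sqrt_u_pos (x : ℝ) (hx : 0 ≤ x) : 0 < Real.sqrt (1 + 2 * Real.sqrt x) := by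
  apply Real.sqrt_pos.2
  nlinarith [Real.sqrt_nonneg x]

lemma psi_hasDeriv {x : ℝ} (hx : 0 < x) :
    HasDerivAt psiFun (Real.exp (-Real.sqrt x) / Real.sqrt (1 + 2 * Real.sqrt x)) x := by
  have hs : 0 < Real.sqrt x := Real.sqrt_pos.2 hx
  have hu : (0:ℝ) < 1 + 2 * Real.sqrt x := by linarith
  have hsu : 0 < Real.sqrt (1 + 2 * Real.sqrt x) := Real.sqrt_pos.2 hu
  have h1 : HasDerivAt Real.sqrt (1 / (2 * Real.sqrt x)) x :=
    Real.hasDerivAt_sqrt (ne_of_gt hx)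
  have h3 : HasDerivAt (fun y => Real.exp (-Real.sqrt y))
      (Real.exp (-Real.sqrt x) * (-(1 / (2 * Real.sqrt x)))) x := h1.neg.exp
  have h4 : HasDerivAt (fun y => 1 + 2 * Real.sqrt y) (2 * (1 / (2 * Real.sqrt x))) x :=
    (h1.const_mul 2).const_add 1
  have h5 : HasDerivAt (fun y => Real.sqrt (1 + 2 * Real.sqrt y))
      ((2 * (1 / (2 * Real.sqrt x))) / (2 * Real.sqrt (1 + 2 * Real.sqrt x))) x :=
    h4.sqrt (ne_of_gt hu)
  have h6 := ((h3.mul h5).const_sub 1)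
  convert h6 using 1
  · rfl
  · rfl
  · rfl
  have hsq : Real.sqrt (1 + 2 * Real.sqrt x) * Real.sqrt (1 + 2 * Real.sqrt x)
      = 1 + 2 * Real.sqrt x := Real.mul_self_sqrt (le_of_lt hu)
  field_simp
  linear_combination (-1 : ℝ) * Real.sq_sqrt (show (0:ℝ) ≤ 1 + Real.sqrt x * 2 by positivity)

theorem stmt_6 :
    psiFun 0 = 0 ∧
    (∀ x ∈ Set.Ioc (0:ℝ) 1,
      HasDerivAt psiFun (Real.exp (-Real.sqrt x) / Real.sqrt (1 + 2 * Real.sqrt x)) x ∧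
      Real.exp (-Real.sqrt x) / Real.sqrt (1 + 2 * Real.sqrt x) =
        (1 - psiFun x) / (1 + 2 * Real.sqrt x)) ∧
    AntitoneOn (fun x => Real.exp (-Real.sqrt x) / Real.sqrt (1 + 2 * Real.sqrt x))
      (Set.Ioc (0:ℝ) 1) ∧
    ConcaveOn ℝ (Set.Icc (0:ℝ) 1) psiFun ∧
    psiFun 1 = 1 - Real.sqrt 3 / Real.exp 1 := by
  have anti : AntitoneOn (fun x => Real.exp (-Real.sqrt x) / Real.sqrt (1 + 2 * Real.sqrt x))
      (Set.Ioc (0:ℝ) 1) := by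
    intro x hx y hy hxy
    have hsx : Real.sqrt x ≤ Real.sqrt y := Real.sqrt_le_sqrt hxy
    apply div_le_div₀ (le_of_lt (Real.exp_pos _))
    · exact Real.exp_le_exp.2 (by linarith)
    · exact sqrt_u_pos x (le_of_lt hx.1)
    · exact Real.sqrt_le_sqrt (by linarith)
  refine ⟨?_, ?_, anti, ?_, ?_⟩
  · simp [psiFun]
  · intro x hx
    have hx0 := hx.1
    have hu : (0:ℝ) < 1 + 2 * Real.sqrt x := by
      nlinarith [Real.sqrt_nonneg x]
    have hsu := sqrt_u_pos x (le_of_lt hx0)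
    refine ⟨psi_hasDeriv hx0, ?_⟩
    have h1ψ : 1 - psiFun x = Real.exp (-Real.sqrt x) * Real.sqrt (1 + 2 * Real.sqrt x) := by
      simp [psiFun]
    rw [h1ψ]
    rw [eq_div_iff (ne_of_gt hu), div_mul_eq_mul_div, mul_div_assoc, Real.div_sqrt]
  · apply AntitoneOn.concaveOn_of_deriv (convex_Icc 0 1)
    · have : Continuous fun x : ℝ =>
          1 - Real.exp (-Real.sqrt x) * Real.sqrt (1 + 2 * Real.sqrt x) := by fun_prop
      exact this.continuousOn
    · rw [interior_Icc]
      intro x hx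
      exact (psi_hasDeriv hx.1).differentiableAt.differentiableWithinAt
    · rw [interior_Icc]
      intro x hx y hy hxy
      rw [(psi_hasDeriv hx.1).deriv, (psi_hasDeriv hy.1).deriv]
      exact anti ⟨hx.1, le_of_lt hx.2⟩ ⟨hy.1, le_of_lt hy.2⟩ hxy
  · simp [psiFun, Real.exp_neg, div_eq_mul_inv, mul_comm]
    norm_num
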